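/- The cVPND problem contains the minimum Steiner tree problem as a special case: for every finite simple undirected connected graph G = (V,E), edge costs c ∈ ℝ^E_+, and set of terminals W ⊆ V with |W| ≥ 2, if one takes the demand vector b with b_v = 1 for v ∈ W and b_v = 0 otherwise, and the non-decreasing concave cost function f(x) = min(x, 1), then the minimum over all routings P of the cost ∑_{e∈E} c_e · f(γ_e(P)) equals the minimum total edge cost ∑_{e∈E(T)} c_e over all subtrees T of G that contain every terminal in W (i.e., the minimum Steiner tree cost for the terminal set W). -/

import Mathlib

open scoped Classical

namespace VPND

variable {V : Type} [Fintype V] [DecidableEq V]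

/-- The set of terminals: vertices with positive maximum cumulative demand. -/
def Terminals (b : V → ℕ) : Set V := {v | 0 < b v}

/-- A routing: one path `path u v` between each pair of terminals, where
`path v u` is required to be the reverse of `path u v`, so that there is
exactly one path per *unordered* pair of terminals. -/
structure Routing (G : SimpleGraph V) (W : Set V) where
  path : ∀ u v : W, G.Walk u.1 v.1
  isPath : ∀ u v : W, (path u v).IsPath
  symm : ∀ u v : W, path v u = (path u v).reverse

/-- A feasible demand matrix: nonnegative, symmetric, zero on the diagonal,
supported on pairs of terminals, and such that the cumulative demand at each
vertex `v` is at most `b v`. -/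
def Feasible (b : V → ℕ) (d : V → V → ℝ) : Prop :=
  (∀ u v, 0 ≤ d u v) ∧ (∀ u v, d u v = d v u) ∧ (∀ v, d v v = 0) ∧
    (∀ u v, d u v ≠ 0 → 0 < b u ∧ 0 < b v) ∧
    (∀ v, ∑ u, d u v ≤ (b v : ℝ))

/-- The traffic load put on edge `e` when the demands `d` are routed along the
routing `R`: the sum of `d u v` over all unordered pairs `{u,v}` of terminals
whose path uses `e` (each unordered pair is counted twice in the double sum,
whence the factor `1/2`). -/
noncomputable def load {G : SimpleGraph V} (b : V → ℕ) (R : Routing G (Terminals b))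
    (d : V → V → ℝ) (e : Sym2 V) : ℝ :=
  (1 / 2) * ∑ u : V, ∑ v : V,
    if h : 0 < b u ∧ 0 < b v then
      (if e ∈ (R.path ⟨u, h.1⟩ ⟨v, h.2⟩).edges then d u v else 0)
    else 0

/-- The capacity that the routing `R` requires on the edge `e`: the maximum,
over all feasible demand matrices `d`, of the load on `e`. -/
noncomputable def capacity {G : SimpleGraph V} (b : V → ℕ) (R : Routing G (Terminals b))
    (e : Sym2 V) : ℝ :=
  sSup {x | ∃ d : V → V → ℝ, Feasible b d ∧ x = load b R d e}

/-- The cost of the routing `R` with concave cost function `f`: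
`∑ e, c e * f (γ_e(R))`. -/
noncomputable def costConcave {G : SimpleGraph V} (c : Sym2 V → ℝ) (b : V → ℕ)
    (f : ℝ → ℝ) (R : Routing G (Terminals b)) : ℝ :=
  ∑ e ∈ G.edgeFinset, c e * f (capacity b R e)

section Graph
open SimpleGraph
variable {α : Type*}

lemma reachWalk {G : SimpleGraph α} {v w : α}
    (hr : (G \ fromEdgeSet {s(v,w)}).Reachable v w) :
    ∀ {a b : α}, G.Walk a b → (G \ fromEdgeSet {s(v,w)}).Reachable a b := by
  intro a b p
  induction p with
  | nil => exact Reachable.refl _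
  | @cons a c b h p ih =>
    refine Reachable.trans ?_ ih
    by_cases he : s(a,c) = s(v,w)
    · rw [Sym2.eq_iff] at he
      rcases he with ⟨rfl, rfl⟩ | ⟨rfl, rfl⟩
      · exact hr
      · exact hr.symm
    · refine Adj.reachable ?_
      rw [sdiff_adj, fromEdgeSet_adj]
      exact ⟨h, by simp [he]⟩

lemma connDel {G : SimpleGraph α} {v w : α} (hG : G.Connected)
    (hr : (G \ fromEdgeSet {s(v,w)}).Reachable v w) :
    (G \ fromEdgeSet {s(v,w)}).Connected := by
  rw [connected_iff] at hG ⊢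
  exact ⟨fun a b => (hG.1 a b).elim fun p => reachWalk hr p, hG.2⟩

lemma exists_spanning_tree {V : Type} [Fintype V] [DecidableEq V] {G : SimpleGraph V}
    (H : G.Subgraph) (hH : H.Connected) :
    ∃ T : G.Subgraph, T ≤ H ∧ T.verts = H.verts ∧ T.Connected ∧ T.coe.IsAcyclic := by
  generalize hn : H.edgeSet.ncard = n
  induction n using Nat.strong_induction_on generalizing H with
  | _ n ih =>
    by_cases hac : H.coe.IsAcyclic
    · exact ⟨H, le_rfl, rfl, hH, hac⟩
    · rw [isAcyclic_iff_forall_adj_isBridge] at hac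
      push_neg at hac
      obtain ⟨a, b, hab, hbr⟩ := hac
      rw [isBridge_iff] at hbr
      have hreach : (H.coe \ fromEdgeSet {s(a,b)}).Reachable a b := by
        by_contra hcon; exact hbr hcon
      have hpre : (Sym2.map (Subtype.val) ⁻¹' {s(a.1, b.1)} : Set (Sym2 H.verts)) = {s(a,b)} := by
        ext e
        induction e with
        | _ x y =>
          simp [Sym2.eq_iff, Subtype.ext_iff]
      have hcoe : (H.deleteEdges {s(a.1, b.1)}).coe = H.coe \ fromEdgeSet {s(a,b)} := by
        rw [Subgraph.coe_deleteEdges_eq, hpre]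
        rfl
      have hconn' : (H.deleteEdges {s(a.1, b.1)}).Connected := by
        rw [Subgraph.connected_iff', hcoe]
        exact connDel hH.coe hreach
      have hss : (H.deleteEdges {s(a.1, b.1)}).edgeSet ⊂ H.edgeSet := by
        constructor
        · exact Subgraph.edgeSet_mono (Subgraph.deleteEdges_le _)
        · intro hsub
          have h1 : s(a.1, b.1) ∈ H.edgeSet := Subgraph.mem_edgeSet.2 hab
          have h2 := hsub h1
          rw [Subgraph.mem_edgeSet, Subgraph.deleteEdges_adj] at h2
          simp at h2
      have hlt : (H.deleteEdges {s(a.1, b.1)}).edgeSet.ncard < n := by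
        rw [← hn]
        exact Set.ncard_lt_ncard hss (Set.toFinite _)
      obtain ⟨T, hTle, hTv, hTc, hTa⟩ := ih _ hlt _ hconn' rfl
      exact ⟨T, hTle.trans (Subgraph.deleteEdges_le _), hTv, hTc, hTa⟩

end Graph

section Cap

variable {G : SimpleGraph V} {b : V → ℕ}

/-- the set of edges used by a routing -/
def used (R : Routing G (Terminals b)) (e : Sym2 V) : Prop :=
  ∃ u v : ↥(Terminals b), e ∈ (R.path u v).edges

lemma feasible_zero : Feasible b (fun _ _ => (0:ℝ)) := by
  refine ⟨fun _ _ => le_rfl, fun _ _ => rfl, fun _ => rfl, fun u v h => absurd rfl h, fun v => ?_⟩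
  simp

lemma load_le (R : Routing G (Terminals b)) {d : V → V → ℝ} (hd : Feasible b d) (e : Sym2 V) :
    load b R d e ≤ (1/2) * ∑ v, (b v : ℝ) := by
  unfold load
  have h1 : ∑ u : V, ∑ v : V,
      (if h : 0 < b u ∧ 0 < b v then
        (if e ∈ (R.path ⟨u, h.1⟩ ⟨v, h.2⟩).edges then d u v else 0) else 0)
      ≤ ∑ u : V, ∑ v : V, d u v := by
    refine Finset.sum_le_sum fun u _ => Finset.sum_le_sum fun v _ => ?_
    split_ifs with h h'
    · exact le_rfl
    · exact hd.1 u v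
    · exact hd.1 u v
  have h2 : ∑ u : V, ∑ v : V, d u v ≤ ∑ v, (b v : ℝ) := by
    rw [Finset.sum_comm]
    exact Finset.sum_le_sum fun v _ => hd.2.2.2.2 v
  have := h1.trans h2
  linarith

lemma bddAbove_capSet (R : Routing G (Terminals b)) (e : Sym2 V) :
    BddAbove {x | ∃ d : V → V → ℝ, Feasible b d ∧ x = load b R d e} := by
  refine ⟨(1/2) * ∑ v, (b v : ℝ), ?_⟩
  rintro x ⟨d, hd, rfl⟩
  exact load_le R hd e

lemma capacity_of_not_used (R : Routing G (Terminals b)) (e : Sym2 V) (h : ¬ used R e) :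
    capacity b R e = 0 := by
  have hset : {x | ∃ d : V → V → ℝ, Feasible b d ∧ x = load b R d e} = {0} := by
    ext x
    simp only [Set.mem_setOf_eq, Set.mem_singleton_iff]
    constructor
    · rintro ⟨d, hd, rfl⟩
      unfold load
      rw [Finset.sum_eq_zero, mul_zero]
      intro u _
      rw [Finset.sum_eq_zero]
      intro v _
      split_ifs with h1 h2
      · exact absurd ⟨⟨u, h1.1⟩, ⟨v, h1.2⟩, h2⟩ h
      · rfl
      · rfl
    · rintro rfl
      refine ⟨fun _ _ => 0, feasible_zero, ?_⟩
      unfold load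
      rw [Finset.sum_eq_zero, mul_zero]
      intro u _
      rw [Finset.sum_eq_zero]
      intro v _
      split_ifs <;> rfl
  rw [capacity, hset, csSup_singleton]

lemma capacity_of_used (R : Routing G (Terminals b)) (e : Sym2 V) (h : used R e) :
    1 ≤ capacity b R e := by
  obtain ⟨u, v, he⟩ := h
  -- u ≠ v
  have huv : (u : V) ≠ (v : V) := by
    intro hq
    have : u = v := Subtype.ext hq
    subst this
    have := (R.isPath u u)
    rw [SimpleGraph.Walk.isPath_iff_eq_nil] at this
    rw [this] at he
    simp at he
  set d : V → V → ℝ := fun x y =>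
    (if x = (u:V) ∧ y = (v:V) then 1 else 0) + (if x = (v:V) ∧ y = (u:V) then 1 else 0) with hd
  have hb1 : ∀ w : ↥(Terminals b), (1:ℝ) ≤ (b (w:V) : ℝ) := by
    intro w
    exact_mod_cast w.2
  have hcol : ∀ y : V, ∑ x : V, d x y =
      (if y = (v:V) then 1 else 0) + (if y = (u:V) then 1 else 0) := by
    intro y
    rw [hd]
    simp only [Finset.sum_add_distrib]
    congr 1
    · rw [Finset.sum_eq_single (u:V)]
      · by_cases hy : y = (v:V) <;> simp [hy]
      · intro c _ hc; simp [hc]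
      · simp
    · rw [Finset.sum_eq_single (v:V)]
      · by_cases hy : y = (u:V) <;> simp [hy]
      · intro c _ hc; simp [hc]
      · simp
  have hfeas : Feasible b d := by
    refine ⟨?_, ?_, ?_, ?_, ?_⟩
    · intro x y; rw [hd]; positivity
    · intro x y; rw [hd]; dsimp only; rw [add_comm]
      exact congrArg₂ (· + ·) (if_congr and_comm rfl rfl) (if_congr and_comm rfl rfl)
    · intro x; rw [hd]; dsimp only
      rw [if_neg, if_neg, add_zero]
      · rintro ⟨rfl, h2⟩; exact huv h2.symm
      · rintro ⟨rfl, h2⟩; exact huv h2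
    · intro x y hxy
      rw [hd] at hxy
      dsimp only at hxy
      rcases em (x = (u:V) ∧ y = (v:V)) with h1 | h1
      · exact ⟨h1.1 ▸ u.2, h1.2 ▸ v.2⟩
      · rcases em (x = (v:V) ∧ y = (u:V)) with h2 | h2
        · exact ⟨h2.1 ▸ v.2, h2.2 ▸ u.2⟩
        · rw [if_neg h1, if_neg h2] at hxy; simp at hxy
    · intro y
      rw [hcol y]
      by_cases h1 : y = (v:V)
      · subst h1
        rw [if_pos rfl, if_neg (fun hq => huv hq.symm), add_zero]
        exact hb1 v
      · rw [if_neg h1, zero_add]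
        by_cases h2 : y = (u:V)
        · subst h2; rw [if_pos rfl]; exact hb1 u
        · rw [if_neg h2]; positivity
  have hload : load b R d e = 1 := by
    unfold load
    have hFeq : ∀ x y : V,
        (if h : 0 < b x ∧ 0 < b y then
          (if e ∈ (R.path ⟨x, h.1⟩ ⟨y, h.2⟩).edges then d x y else 0) else 0)
        = d x y := by
      intro x y
      rcases em (x = (u:V) ∧ y = (v:V)) with ⟨rfl, rfl⟩ | h1
      · rw [dif_pos ⟨u.2, v.2⟩]
        simp only [Subtype.coe_eta]
        rw [if_pos he]
      · rcases em (x = (v:V) ∧ y = (u:V)) with ⟨rfl, rfl⟩ | h2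
        · rw [dif_pos ⟨v.2, u.2⟩]
          simp only [Subtype.coe_eta]
          rw [if_pos]
          rw [R.symm, SimpleGraph.Walk.edges_reverse, List.mem_reverse]
          exact he
        · have hd0 : d x y = 0 := by rw [hd]; dsimp only; rw [if_neg h1, if_neg h2, add_zero]
          rw [hd0]
          split_ifs <;> rfl
    simp only [hFeq]
    have : ∑ x : V, ∑ y : V, d x y = 2 := by
      have := Finset.sum_congr rfl (fun x (_ : x ∈ Finset.univ) => hcol x)
      rw [Finset.sum_comm]
      rw [this]
      rw [Finset.sum_add_distrib]
      rw [Finset.sum_ite_eq' Finset.univ (v:V) (fun _ => (1:ℝ))]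
      rw [Finset.sum_ite_eq' Finset.univ (u:V) (fun _ => (1:ℝ))]
      norm_num
    rw [this]
    norm_num
  exact le_csSup (bddAbove_capSet R e) ⟨d, hfeas, hload.symm⟩

lemma costConcave_eq (c : Sym2 V → ℝ) (R : Routing G (Terminals b)) :
    costConcave c b (fun t => min t 1) R
      = ∑ e ∈ G.edgeFinset.filter (fun e => used R e), c e := by
  rw [Finset.sum_filter, costConcave]
  refine Finset.sum_congr rfl fun e _ => ?_
  by_cases h : used R e
  · rw [if_pos h, min_eq_right (capacity_of_used R e h), mul_one]
  · rw [if_neg h, capacity_of_not_used R e h]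
    norm_num

end Cap

section Main

open SimpleGraph

variable {G : SimpleGraph V} {b : V → ℕ}

lemma routing_of_tree (T : G.Subgraph) (hWT : Terminals b ⊆ T.verts) (hT : T.coe.IsTree) :
    ∃ R : Routing G (Terminals b), ∀ e, used R e → e ∈ T.edgeSet := by
  have mem : ∀ u : ↥(Terminals b), (u:V) ∈ T.verts := fun u => hWT u.2
  let tp : ∀ u v : ↥(Terminals b), T.coe.Walk ⟨u, mem u⟩ ⟨v, mem v⟩ :=
    fun u v => (hT.existsUnique_path ⟨u, mem u⟩ ⟨v, mem v⟩).choose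
  have tpp : ∀ u v, (tp u v).IsPath :=
    fun u v => (hT.existsUnique_path ⟨u, mem u⟩ ⟨v, mem v⟩).choose_spec.1
  have tpu : ∀ (u v : ↥(Terminals b)) (q : T.coe.Walk ⟨u, mem u⟩ ⟨v, mem v⟩), q.IsPath → q = tp u v :=
    fun u v q hq => (hT.existsUnique_path ⟨u, mem u⟩ ⟨v, mem v⟩).choose_spec.2 q hq
  have hinj : Function.Injective ⇑T.hom := by
    rw [Subgraph.coe_hom]; exact Subtype.val_injective
  refine ⟨⟨fun u v => (tp u v).map T.hom,
      fun u v => Walk.map_isPath_of_injective hinj (tpp u v), fun u v => ?_⟩, ?_⟩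
  · refine Eq.trans ?_ (Walk.reverse_map (f := T.hom) (p := tp u v)).symm
    exact congrArg _ (tpu v u ((tp u v).reverse) ((tpp u v).reverse)).symm
  · rintro e ⟨u, v, he⟩
    replace he : e ∈ (tp u v).edges.map (Sym2.map T.hom) := by
      rw [← Walk.edges_map (f := T.hom) (p := tp u v)]; exact he
    simp only [List.mem_map] at he
    obtain ⟨e', he', rfl⟩ := he
    have h1 : e' ∈ T.coe.edgeSet := (tp u v).edges_subset_edgeSet he'
    rw [← Subgraph.image_coe_edgeSet_coe]
    rw [Subgraph.coe_hom]
    exact ⟨e', h1, rfl⟩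

lemma tree_of_routing (hne : (Terminals b).Nonempty) (R : Routing G (Terminals b)) :
    ∃ T : G.Subgraph, Terminals b ⊆ T.verts ∧ T.coe.IsTree ∧
      T.edgeSet ⊆ {e | used R e} := by
  obtain ⟨u0, hu0⟩ := hne
  set u₀ : ↥(Terminals b) := ⟨u0, hu0⟩ with hu₀
  set H : G.Subgraph := ⨆ v : ↥(Terminals b), (R.path u₀ v).toSubgraph with hH
  have hverts : ∀ w : ↥(Terminals b), (w:V) ∈ H.verts := by
    intro w
    rw [hH, Subgraph.verts_iSup]
    exact Set.mem_iUnion.2 ⟨w, (R.path u₀ w).end_mem_verts_toSubgraph⟩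
  have hle0 : ∀ (vz : ↥(Terminals b)) (z : V) (hz : z ∈ (R.path u₀ vz).support),
      ((R.path u₀ vz).takeUntil z hz).toSubgraph ≤ H := by
    intro vz z hz
    have h1 : ((R.path u₀ vz).takeUntil z hz).toSubgraph ≤ (R.path u₀ vz).toSubgraph := by
      conv_rhs => rw [← (R.path u₀ vz).take_spec hz]
      rw [Walk.toSubgraph_append]
      exact le_sup_left
    exact h1.trans (le_iSup (fun v : ↥(Terminals b) => (R.path u₀ v).toSubgraph) vz)
  have hHconn : H.Connected := by
    rw [Subgraph.connected_iff_forall_exists_walk_subgraph]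
    refine ⟨⟨u0, hverts u₀⟩, ?_⟩
    intro x y hx hy
    rw [hH, Subgraph.verts_iSup, Set.mem_iUnion] at hx hy
    obtain ⟨vx, hvx⟩ := hx
    obtain ⟨vy, hvy⟩ := hy
    rw [Walk.mem_verts_toSubgraph] at hvx hvy
    refine ⟨((R.path u₀ vx).takeUntil x hvx).reverse.append ((R.path u₀ vy).takeUntil y hvy), ?_⟩
    rw [Walk.toSubgraph_append, Walk.toSubgraph_reverse]
    exact sup_le (hle0 vx x hvx) (hle0 vy y hvy)
  have hedge : H.edgeSet ⊆ {e | used R e} := by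
    intro e he
    induction e with
    | _ x y =>
      rw [Subgraph.mem_edgeSet, hH, Subgraph.iSup_adj] at he
      obtain ⟨v, hv⟩ := he
      have : s(x, y) ∈ (R.path u₀ v).toSubgraph.edgeSet := Subgraph.mem_edgeSet.2 hv
      rw [Walk.mem_edges_toSubgraph] at this
      exact ⟨u₀, v, this⟩
  obtain ⟨T, hTle, hTv, hTc, hTa⟩ := exists_spanning_tree H hHconn
  exact ⟨T, fun w hw => hTv ▸ hverts ⟨w, hw⟩, ⟨hTc.coe, hTa⟩,
    (Subgraph.edgeSet_mono hTle).trans hedge⟩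


/-- **cVPND contains the minimum Steiner tree problem as a special case**:
for every connected graph `G`, nonnegative edge costs `c`, and terminal set
`W` with `|W| ≥ 2`, taking the demand vector `b` that is `1` on `W` and `0`
elsewhere, and the concave cost function `f x = min x 1`, the minimum cost of
a routing equals the minimum cost of a Steiner tree for `W`. -/
theorem cvpnd_contains_steiner_tree
    (G : SimpleGraph V) (hG : G.Connected)
    (c : Sym2 V → ℝ) (hc : ∀ e, 0 ≤ c e)
    (W : Set V) (hW : 2 ≤ W.ncard)
    (b : V → ℕ) (hb : ∀ v, b v = if v ∈ W then 1 else 0) :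
    sInf {x : ℝ | ∃ R : Routing G (Terminals b),
        x = costConcave c b (fun t => min t 1) R} =
      sInf {x : ℝ | ∃ T : G.Subgraph, W ⊆ T.verts ∧ T.coe.IsTree ∧
        x = ∑ e ∈ T.edgeSet.toFinset, c e} := by
  classical
  have hTW : Terminals b = W := by
    ext v
    simp only [Terminals, Set.mem_setOf_eq, hb]
    by_cases hv : v ∈ W <;> simp [hv]
  have hWne : W.Nonempty := by
    rcases Set.eq_empty_or_nonempty W with h | h
    · rw [h] at hW; simp at hW
    · exact h
  have hne : (Terminals b).Nonempty := hTW ▸ hWne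
  set S1 := {x : ℝ | ∃ R : Routing G (Terminals b),
      x = costConcave c b (fun t => min t 1) R} with hS1
  set S2 := {x : ℝ | ∃ T : G.Subgraph, W ⊆ T.verts ∧ T.coe.IsTree ∧
      x = ∑ e ∈ T.edgeSet.toFinset, c e} with hS2
  -- S2 is nonempty via a spanning tree of the whole graph
  have htop : (⊤ : SimpleGraph.Subgraph G).Connected := by
    rw [SimpleGraph.Subgraph.connected_iff']
    exact (SimpleGraph.Subgraph.topIso (G := G)).connected_iff.2 hG
  obtain ⟨T0, hT0le, hT0v, hT0c, hT0a⟩ := exists_spanning_tree ⊤ htop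
  have hT0W : W ⊆ T0.verts := by
    rw [hT0v]; intro w _; trivial
  have hS2ne : S2.Nonempty :=
    ⟨_, T0, hT0W, ⟨hT0c.coe, hT0a⟩, rfl⟩
  -- S1 is nonempty
  obtain ⟨R0, _⟩ := routing_of_tree T0 (hTW ▸ hT0W) ⟨hT0c.coe, hT0a⟩
  have hS1ne : S1.Nonempty := ⟨_, R0, rfl⟩
  -- both sets are bounded below by 0
  have hS1bdd : BddBelow S1 := by
    refine ⟨0, ?_⟩
    rintro x ⟨R, rfl⟩
    rw [costConcave_eq]
    exact Finset.sum_nonneg fun e _ => hc e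
  have hS2bdd : BddBelow S2 := by
    refine ⟨0, ?_⟩
    rintro x ⟨T, _, _, rfl⟩
    exact Finset.sum_nonneg fun e _ => hc e
  refine le_antisymm ?_ ?_
  · -- routing optimum ≤ tree optimum
    refine le_csInf hS2ne ?_
    rintro y ⟨T, hTv, hTt, rfl⟩
    obtain ⟨R, hRused⟩ := routing_of_tree T (hTW ▸ hTv) hTt
    have hle : costConcave c b (fun t => min t 1) R ≤ ∑ e ∈ T.edgeSet.toFinset, c e := by
      rw [costConcave_eq]
      refine Finset.sum_le_sum_of_subset_of_nonneg ?_ (fun e _ _ => hc e)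
      intro e he
      rw [Finset.mem_filter] at he
      rw [Set.mem_toFinset]
      exact hRused e he.2
    exact (csInf_le hS1bdd ⟨R, rfl⟩).trans hle
  · -- tree optimum ≤ routing optimum
    refine le_csInf hS1ne ?_
    rintro x ⟨R, rfl⟩
    obtain ⟨T, hTv, hTt, hTe⟩ := tree_of_routing hne R
    have hle : ∑ e ∈ T.edgeSet.toFinset, c e ≤ costConcave c b (fun t => min t 1) R := by
      rw [costConcave_eq]
      refine Finset.sum_le_sum_of_subset_of_nonneg ?_ (fun e _ _ => hc e)
      intro e he
      rw [Set.mem_toFinset] at he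
      rw [Finset.mem_filter]
      exact ⟨SimpleGraph.mem_edgeFinset.2 (T.edgeSet_subset he), hTe he⟩
    exact (csInf_le hS2bdd ⟨T, hTW ▸ hTv, hTt, rfl⟩).trans hle


end Main

end VPND
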